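/- Let f : ℝ → ℝ ∪ {−∞} and let g : ℝ → ℝ be concave and continuous. Then the generalized Legendre spectrum L_g(h) := (f + g)⋆⋆(h) − g(h) satisfies f(h) ≤ L_g(h) ≤ f⋆⋆(h) for every h ∈ ℝ (where both transforms are taken with the same constant d and f, f+g are each dominated by an affine function). -/

import Mathlib

open Filter Set

/-- Multifractal-style Legendre transform (concave convention):
`legStar d f q = ⨅ h, (d + q·h) − f h`. -/
noncomputable def legStar (d : ℝ) (f : ℝ → EReal) (q : ℝ) : EReal :=
  ⨅ h : ℝ, ((d + q * h : ℝ) : EReal) - f h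

/-- Double Legendre transform. -/
noncomputable def legStar2 (d : ℝ) (f : ℝ → EReal) (x : ℝ) : EReal :=
  ⨅ q : ℝ, ((d + q * x : ℝ) : EReal) - legStar d f q

/-- Concave envelope: pointwise infimum of all affine majorants. -/
noncomputable def concEnv (f : ℝ → EReal) (x : ℝ) : EReal :=
  ⨅ p : {p : ℝ × ℝ // ∀ t, f t ≤ ((p.1 * t + p.2 : ℝ) : EReal)},
    ((p.1.1 * x + p.1.2 : ℝ) : EReal)

/-- Trichotomy for `EReal`. -/
private lemma ereal_trichotomy (c : EReal) : c = ⊥ ∨ (∃ r : ℝ, c = (r : EReal)) ∨ c = ⊤ := by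
  induction c using EReal.rec with
  | bot => exact Or.inl rfl
  | coe r => exact Or.inr (Or.inl ⟨r, rfl⟩)
  | top => exact Or.inr (Or.inr rfl)

/-- Key `EReal` arithmetic: from `A ≤ b - C` with real `b` and `C ≠ ⊤`, deduce `C ≤ b - A`. -/
private lemma le_sub_of_le_sub' {b : ℝ} {A C : EReal} (hC : C ≠ ⊤)
    (h1 : A ≤ (b : EReal) - C) : C ≤ (b : EReal) - A := by
  induction C using EReal.rec with
  | bot => exact bot_le
  | coe c =>
      have h1' : A ≤ ((b - c : ℝ) : EReal) := by rwa [← EReal.coe_sub] at h1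
      calc (c : EReal) = ((b - (b - c) : ℝ) : EReal) := by norm_num
        _ = (b : EReal) - ((b - c : ℝ) : EReal) := by rw [EReal.coe_sub]
        _ ≤ (b : EReal) - A := EReal.sub_le_sub le_rfl h1'
  | top => exact absurd rfl hC

/-- Biconjugate dominates the function (when the function is never `⊤`). -/
private lemma le_legStar2 (d : ℝ) (F : ℝ → EReal) (hF : ∀ t, F t ≠ ⊤) (x : ℝ) :
    F x ≤ legStar2 d F x := by
  refine le_iInf fun q => ?_
  have h1 : legStar d F q ≤ ((d + q * x : ℝ) : EReal) - F x := iInf_le _ x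
  exact le_sub_of_le_sub' (hF x) h1

/-- Monotonicity of the double transform. -/
private lemma legStar2_mono (d : ℝ) {F G : ℝ → EReal} (h : ∀ t, F t ≤ G t) (x : ℝ) :
    legStar2 d F x ≤ legStar2 d G x := by
  refine iInf_mono fun q => EReal.sub_le_sub le_rfl ?_
  exact iInf_mono fun t => EReal.sub_le_sub le_rfl (h t)

/-- Every concave `g : ℝ → ℝ` has a supporting line (supergradient) at every point. -/
private lemma exists_supergradient {g : ℝ → ℝ} (hg : ConcaveOn ℝ Set.univ g) (x : ℝ) :
    ∃ p : ℝ, ∀ t, g t ≤ g x + p * (t - x) := by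
  set S : Set ℝ := (fun t => (g t - g x) / (t - x)) '' Set.Ioi x with hS
  have hne : S.Nonempty := ⟨_, ⟨x + 1, by simp, rfl⟩⟩
  have hbdd : BddAbove S := by
    refine ⟨(g x - g (x - 1)) / (x - (x - 1)), ?_⟩
    rintro s ⟨t, ht, rfl⟩
    exact hg.slope_anti_adjacent (mem_univ _) (mem_univ _) (by linarith) ht
  refine ⟨sSup S, fun t => ?_⟩
  rcases lt_trichotomy t x with h | h | h
  · have hub : ∀ s ∈ S, s ≤ (g x - g t) / (x - t) := by
      rintro s ⟨u, hu, rfl⟩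
      exact hg.slope_anti_adjacent (mem_univ _) (mem_univ _) h hu
    have hle : sSup S ≤ (g x - g t) / (x - t) := csSup_le hne hub
    have hxt : (0 : ℝ) < x - t := by linarith
    rw [le_div_iff₀ hxt] at hle
    nlinarith
  · simp [h]
  · have hs : (g t - g x) / (t - x) ≤ sSup S := le_csSup hbdd ⟨t, h, rfl⟩
    have htx : (0 : ℝ) < t - x := by linarith
    rw [div_le_iff₀ htx] at hs
    linarith

/-- If a real function has a supporting line at `x`, its biconjugate at `x` is at most its value. -/
private lemma legStar2_le_of_supergradient (d : ℝ) {φ : ℝ → ℝ} {x p : ℝ}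
    (hp : ∀ t, φ t ≤ φ x + p * (t - x)) :
    legStar2 d (fun t => (φ t : EReal)) x ≤ (φ x : EReal) := by
  have hstar : ((d + p * x - φ x : ℝ) : EReal) ≤ legStar d (fun t => (φ t : EReal)) p := by
    refine le_iInf fun t => ?_
    rw [show ((d + p * t : ℝ) : EReal) - ((φ t : ℝ) : EReal)
        = ((d + p * t - φ t : ℝ) : EReal) from (EReal.coe_sub _ _).symm]
    exact EReal.coe_le_coe_iff.2 (by nlinarith [hp t])
  calc legStar2 d (fun t => (φ t : EReal)) x
      ≤ ((d + p * x : ℝ) : EReal) - legStar d (fun t => (φ t : EReal)) p := iInf_le _ p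
    _ ≤ ((d + p * x : ℝ) : EReal) - ((d + p * x - φ x : ℝ) : EReal) :=
        EReal.sub_le_sub le_rfl hstar
    _ = (φ x : EReal) := by rw [← EReal.coe_sub]; norm_num

/-- f ≤ L_g = (f+g)⋆⋆ − g ≤ f⋆⋆ for concave continuous real g. -/
theorem generalized_legendre_spectrum_sandwich (d : ℝ) (f : ℝ → EReal)
    (hf : ∀ h, f h ≠ ⊤) (g : ℝ → ℝ)
    (hgconc : ConcaveOn ℝ Set.univ g) (hgcont : Continuous g)
    (hfdom : ∃ α β : ℝ, ∀ h, f h ≤ ((α * h + β : ℝ) : EReal))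
    (hfgdom : ∃ α β : ℝ, ∀ h, f h + (g h : EReal) ≤ ((α * h + β : ℝ) : EReal)) :
    ∀ h : ℝ,
      f h ≤ legStar2 d (fun t => f t + (g t : EReal)) h - (g h : EReal) ∧
      legStar2 d (fun t => f t + (g t : EReal)) h - (g h : EReal) ≤ legStar2 d f h := by
  intro x
  set F : ℝ → EReal := fun t => f t + (g t : EReal) with hFdef
  have hFtop : ∀ t, F t ≠ ⊤ := by
    intro t
    rcases ereal_trichotomy (f t) with h | ⟨r, h⟩ | h
    · simp [hFdef, h]
    · simp [hFdef, h, ← EReal.coe_add]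
    · exact absurd h (hf t)
  constructor
  · -- f x ≤ legStar2 d F x - g x
    have h1 : F x ≤ legStar2 d F x := le_legStar2 d F hFtop x
    have h2 : F x - (g x : EReal) ≤ legStar2 d F x - (g x : EReal) :=
      EReal.sub_le_sub h1 le_rfl
    have h3 : F x - (g x : EReal) = f x := EReal.add_sub_cancel_right
    rwa [h3] at h2
  · -- legStar2 d F x - g x ≤ legStar2 d f x
    refine le_iInf fun q => ?_
    rcases ereal_trichotomy (legStar d f q) with hc | ⟨c, hc⟩ | hc
    · rw [hc, EReal.coe_sub_bot]; exact le_top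
    · -- legStar d f q = c real: affine majorant of f
      have hmaj : ∀ t, f t ≤ ((q * t + (d - c) : ℝ) : EReal) := by
        intro t
        have h1 : (c : EReal) ≤ ((d + q * t : ℝ) : EReal) - f t := hc ▸ iInf_le _ t
        have h2 : f t ≤ ((d + q * t : ℝ) : EReal) - (c : EReal) :=
          le_sub_of_le_sub' (hf t) h1
        rwa [show ((d + q * t : ℝ) : EReal) - (c : EReal)
            = ((q * t + (d - c) : ℝ) : EReal) from by rw [← EReal.coe_sub]; norm_cast; ring]
          at h2
      set φ : ℝ → ℝ := fun t => q * t + (d - c) + g t with hφdef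
      have hFφ : ∀ t, F t ≤ ((φ t : ℝ) : EReal) := by
        intro t
        calc F t = f t + (g t : EReal) := rfl
          _ ≤ ((q * t + (d - c) : ℝ) : EReal) + (g t : EReal) :=
              add_le_add_left (hmaj t) _
          _ = ((φ t : ℝ) : EReal) := by rw [← EReal.coe_add]
      obtain ⟨p, hp⟩ := exists_supergradient hgconc x
      have hpφ : ∀ t, φ t ≤ φ x + (q + p) * (t - x) := by
        intro t
        have := hp t
        simp only [hφdef]
        nlinarith
      have h1 : legStar2 d F x ≤ ((φ x : ℝ) : EReal) :=
        (legStar2_mono d hFφ x).trans (legStar2_le_of_supergradient d hpφ)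
      have h2 : legStar2 d F x ≤ ((q * x + (d - c) : ℝ) : EReal) + ((g x : ℝ) : EReal) := by
        rwa [show ((φ x : ℝ) : EReal)
            = ((q * x + (d - c) : ℝ) : EReal) + ((g x : ℝ) : EReal) from by
          rw [← EReal.coe_add]] at h1
      have h3 : legStar2 d F x - (g x : EReal) ≤ ((q * x + (d - c) : ℝ) : EReal) :=
        EReal.sub_le_of_le_add h2
      rw [hc, show ((d + q * x : ℝ) : EReal) - (c : EReal)
          = ((q * x + (d - c) : ℝ) : EReal) from by rw [← EReal.coe_sub]; norm_cast; ring]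
      exact h3
    · -- legStar d f q = ⊤ : then f ≡ ⊥, so everything collapses
      have hfb : ∀ t, f t = ⊥ := by
        intro t
        have h1 : ((d + q * t : ℝ) : EReal) - f t = ⊤ := by
          have := iInf_eq_top.1 hc t
          exact this
        rcases ereal_trichotomy (f t) with h | ⟨r, h⟩ | h
        · exact h
        · rw [h, ← EReal.coe_sub] at h1
          exact absurd h1 (EReal.coe_ne_top _)
        · exact absurd h (hf t)
      have hFb : ∀ t, F t = ⊥ := by
        intro t; simp [hFdef, hfb t]
      have hL : legStar d F 0 = ⊤ := by
        refine iInf_eq_top.2 fun t => ?_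
        rw [hFb t, EReal.coe_sub_bot]
      have h2 : legStar2 d F x ≤ ((d + 0 * x : ℝ) : EReal) - legStar d F 0 := iInf_le _ 0
      rw [hL, EReal.sub_top] at h2
      have h3 : legStar2 d F x = ⊥ := le_bot_iff.1 h2
      rw [h3, EReal.bot_sub]
      exact bot_le
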